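/- Let (a₁,a₂), (b₁,b₂) ∈ ℝ² be distinct points and R₁, R₂ > 0. Then the complex algebraic sets {x ∈ ℂ² : (x₁ − a₁)² + (x₂ − a₂)² = R₁²} and {x ∈ ℂ² : (x₁ − b₁)² + (x₂ − b₂)² = R₂²} have nonempty intersection. -/

import Mathlib

lemma quad_root (A B C : ℂ) (hA : A ≠ 0) : ∃ t : ℂ, A * t ^ 2 + B * t + C = 0 := by
  obtain ⟨s, hs⟩ := IsAlgClosed.exists_pow_nat_eq (B ^ 2 - 4 * A * C) (n := 2) (by norm_num)
  refine ⟨(-B + s) / (2 * A), ?_⟩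
  field_simp
  linear_combination hs

theorem stmt19 (a b : ℝ × ℝ) (hab : a ≠ b) (R₁ R₂ : ℝ) (hR₁ : 0 < R₁) (hR₂ : 0 < R₂) :
    ∃ x : ℂ × ℂ,
      (x.1 - (a.1 : ℂ)) ^ 2 + (x.2 - (a.2 : ℂ)) ^ 2 = (R₁ : ℂ) ^ 2 ∧
      (x.1 - (b.1 : ℂ)) ^ 2 + (x.2 - (b.2 : ℂ)) ^ 2 = (R₂ : ℂ) ^ 2 := by
  set d₁ : ℂ := (b.1 : ℂ) - a.1 with hd1
  set d₂ : ℂ := (b.2 : ℂ) - a.2 with hd2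
  have hDr : (b.1 - a.1) ^ 2 + (b.2 - a.2) ^ 2 ≠ 0 := by
    intro h
    apply hab
    have h1 : b.1 - a.1 = 0 ∧ b.2 - a.2 = 0 := by
      constructor <;> nlinarith [sq_nonneg (b.1 - a.1), sq_nonneg (b.2 - a.2)]
    have := h1.1; have := h1.2
    ext <;> linarith
  have hD : d₁ ^ 2 + d₂ ^ 2 ≠ 0 := by
    rw [hd1, hd2]
    intro h
    apply hDr
    have : (((b.1 - a.1) ^ 2 + (b.2 - a.2) ^ 2 : ℝ) : ℂ) = 0 := by push_cast; linear_combination h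
    exact_mod_cast this
  set D : ℂ := d₁ ^ 2 + d₂ ^ 2 with hDdef
  set K : ℂ := (R₁ : ℂ) ^ 2 - (R₂ : ℂ) ^ 2 + (b.1 : ℂ) ^ 2 + (b.2 : ℂ) ^ 2 - (a.1 : ℂ) ^ 2 - (a.2 : ℂ) ^ 2 with hK
  set p₁ : ℂ := K * d₁ / (2 * D) with hp1
  set p₂ : ℂ := K * d₂ / (2 * D) with hp2
  have hp : 2 * d₁ * p₁ + 2 * d₂ * p₂ = K := by
    rw [hp1, hp2]
    field_simp
    ring
  obtain ⟨t, ht⟩ := quad_root D (2 * (-d₂ * (p₁ - a.1) + d₁ * (p₂ - a.2)))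
    ((p₁ - a.1) ^ 2 + (p₂ - a.2) ^ 2 - (R₁ : ℂ) ^ 2) hD
  refine ⟨(p₁ - t * d₂, p₂ + t * d₁), ?_, ?_⟩
  · linear_combination ht
  · linear_combination ht - hp
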